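/- The function f(z) = 1/(1+z²) satisfies, for every z in the horizontal strip S_{−1,1}, the representation f(z) = (1/2) ∫ℝ e^{izt} e^{−|t|} dt; moreover f is positive definite on S_{−1,1} and negative definite on each of the half-planes S_{1,+∞} = {z : Im z > 1} and S_{−∞,−1} = {z : Im z < −1}. -/

import Mathlib

open Complex MeasureTheory Filter Set Topology
open scoped Real BigOperators ComplexOrder

noncomputable section

/-- `f : ℝ → ℂ` is positive definite. -/
def IsPosDefFun (f : ℝ → ℂ) : Prop :=
  ∀ (n : ℕ) (x : Fin n → ℝ) (ξ : Fin n → ℂ),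
    0 ≤ ∑ k, ∑ l, f (x k - x l) * ξ k * (starRingEnd ℂ) (ξ l)

/-- `f` is positive definite on `S ⊆ ℂ`. -/
def IsPosDefOnC (f : ℂ → ℂ) (S : Set ℂ) : Prop :=
  ∀ (n : ℕ) (z : Fin n → ℂ), (∀ k l, z k - (starRingEnd ℂ) (z l) ∈ S) →
    ∀ ξ : Fin n → ℂ,
      0 ≤ ∑ k, ∑ l, f (z k - (starRingEnd ℂ) (z l)) * ξ k * (starRingEnd ℂ) (ξ l)

/-- `f` is co-positive definite on `T ⊆ ℂ`. -/
def IsCoPosDefOnC (f : ℂ → ℂ) (T : Set ℂ) : Prop :=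
  ∀ (n : ℕ) (z : Fin n → ℂ), (∀ k l, z k + (starRingEnd ℂ) (z l) ∈ T) →
    ∀ ξ : Fin n → ℂ,
      0 ≤ ∑ k, ∑ l, f (z k + (starRingEnd ℂ) (z l)) * ξ k * (starRingEnd ℂ) (ξ l)

/-- `G : ℝ → ℂ` is co-positive definite on `I ⊆ ℝ`. -/
def IsCoPosDefOnR (G : ℝ → ℂ) (I : Set ℝ) : Prop :=
  ∀ (n : ℕ) (x : Fin n → ℝ), (∀ k l, x k + x l ∈ I) →
    ∀ ξ : Fin n → ℂ,
      0 ≤ ∑ k, ∑ l, G (x k + x l) * ξ k * (starRingEnd ℂ) (ξ l)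

/-- Horizontal strip `S_{a,b}`. -/
def HStrip (a b : EReal) : Set ℂ := {z | a < (z.im : EReal) ∧ (z.im : EReal) < b}

/-- Vertical strip `T_{a,b}`. -/
def VStrip (a b : EReal) : Set ℂ := {z | a < (z.re : EReal) ∧ (z.re : EReal) < b}

/-- `μ` is exponentially finite with respect to the interval `(a,b)`. -/
def ExpFinite (μ : Measure ℝ) (a b : EReal) : Prop :=
  ∀ y : ℝ, a < (y : EReal) → (y : EReal) < b →
    Integrable (fun t : ℝ => Real.exp (-y * t)) μ


lemma auxIntOn_cexp_Ioi {c : ℂ} (hc : c.re < 0) :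
    IntegrableOn (fun t : ℝ => Complex.exp (c * t)) (Ioi (0:ℝ)) := by
  refine Integrable.mono' (g := fun t : ℝ => Real.exp (-(-c.re) * t))
    (exp_neg_integrableOn_Ioi 0 (by linarith)) ?_ ?_
  · exact (Continuous.aestronglyMeasurable (by fun_prop))
  · filter_upwards with t
    rw [Complex.norm_exp]
    simp [Complex.mul_re]

lemma auxInt_cexp_Ioi {c : ℂ} (hc : c.re < 0) :
    ∫ t : ℝ in Ioi (0:ℝ), Complex.exp (c * t) = -(1 / c) := by
  have hc0 : c ≠ 0 := by intro h; rw [h] at hc; simp at hc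
  have D : ∀ x : ℝ, HasDerivAt (fun y : ℝ => Complex.exp (c * y) / c) (Complex.exp (c * x)) x := by
    intro x
    conv => congr
    rw [← mul_div_cancel_right₀ (Complex.exp (c * x)) hc0]
    apply ((Complex.hasDerivAt_exp _).comp x _).div_const c
    simpa only [mul_one, id] using ((hasDerivAt_id (x : ℂ)).const_mul _).comp_ofReal
  have hT : Tendsto (fun x : ℝ => Complex.exp (c * x) / c) atTop (𝓝 0) := by
    rw [tendsto_zero_iff_norm_tendsto_zero]
    have h1 : Tendsto (fun x : ℝ => Real.exp (c.re * x) / ‖c‖) atTop (𝓝 (0 / ‖c‖)) :=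
      (Real.tendsto_exp_atBot.comp (tendsto_id.const_mul_atTop_of_neg hc)).div_const _
    rw [zero_div] at h1
    refine h1.congr fun x => ?_
    simp [Complex.norm_exp, Complex.mul_re]
  have := integral_Ioi_of_hasDerivAt_of_tendsto' (fun x _ => D x) (auxIntOn_cexp_Ioi hc) hT
  rw [this]
  simp

lemma auxIntOn_cexp_Iic {c : ℂ} (hc : 0 < c.re) :
    IntegrableOn (fun t : ℝ => Complex.exp (c * t)) (Iic (0:ℝ)) := by
  rw [← (Measure.measurePreserving_neg (volume : Measure ℝ)).integrableOn_comp_preimage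
      (Homeomorph.neg ℝ).measurableEmbedding]
  simp only [Function.comp_def, neg_preimage, neg_Iic, neg_zero]
  rw [integrableOn_Ici_iff_integrableOn_Ioi]
  refine (auxIntOn_cexp_Ioi (c := -c) (by simpa using hc)).congr_fun (fun t _ => ?_)
    measurableSet_Ioi
  congr 1
  push_cast
  ring

lemma auxInt_cexp_Iic {c : ℂ} (hc : 0 < c.re) :
    ∫ t : ℝ in Iic (0:ℝ), Complex.exp (c * t) = 1 / c := by
  have h1 : ∀ t : ℝ, Complex.exp (c * t) = (fun s : ℝ => Complex.exp (-c * s)) (-t) := by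
    intro t; simp only []; congr 1; push_cast; ring
  calc ∫ t : ℝ in Iic (0:ℝ), Complex.exp (c * t)
      = ∫ t : ℝ in Iic (0:ℝ), (fun s : ℝ => Complex.exp (-c * s)) (-t) := by
        exact setIntegral_congr_fun measurableSet_Iic fun t _ => h1 t
    _ = ∫ t : ℝ in Ioi (-(0:ℝ)), Complex.exp (-c * t) := integral_comp_neg_Iic (0:ℝ) (fun s : ℝ => Complex.exp (-c * s))
    _ = 1 / c := by
        rw [neg_zero, auxInt_cexp_Ioi (by simpa using hc)]
        rw [div_neg, neg_neg]

lemma aux_re_plus (z : ℂ) : (I * z + 1).re = 1 - z.im := by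
  simp [Complex.add_re, Complex.mul_re]; ring

lemma aux_re_minus (z : ℂ) : (I * z - 1).re = -z.im - 1 := by
  simp [Complex.sub_re, Complex.mul_re]

lemma aux_ne_of_re {w : ℂ} (h : w.re ≠ 0) : w ≠ 0 := fun h0 => h (by rw [h0]; simp)

lemma aux_factor (z : ℂ) : (I * z + 1) * (-(I * z - 1)) = 1 + z ^ 2 := by
  linear_combination (-(z^2)) * Complex.I_sq

lemma strip_eqOn_Iic (z : ℂ) : ∀ t ∈ Iic (0:ℝ),
    Complex.exp (I * z * t) * (Real.exp (-|t|) : ℂ) = Complex.exp ((I * z + 1) * t) := by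
  intro t ht
  rw [abs_of_nonpos ht, neg_neg, Complex.ofReal_exp, ← Complex.exp_add]
  congr 1; push_cast; ring

lemma strip_eqOn_Ioi (z : ℂ) : ∀ t ∈ Ioi (0:ℝ),
    Complex.exp (I * z * t) * (Real.exp (-|t|) : ℂ) = Complex.exp ((I * z - 1) * t) := by
  intro t ht
  rw [abs_of_pos ht, Complex.ofReal_exp, ← Complex.exp_add]
  congr 1; push_cast; ring

lemma strip_intOn_Iic {z : ℂ} (h2 : z.im < 1) :
    IntegrableOn (fun t : ℝ => Complex.exp (I * z * t) * (Real.exp (-|t|) : ℂ)) (Iic (0:ℝ)) :=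
  (auxIntOn_cexp_Iic (by rw [aux_re_plus]; linarith)).congr_fun
    (fun t ht => (strip_eqOn_Iic z t ht).symm) measurableSet_Iic

lemma strip_intOn_Ioi {z : ℂ} (h1 : -1 < z.im) :
    IntegrableOn (fun t : ℝ => Complex.exp (I * z * t) * (Real.exp (-|t|) : ℂ)) (Ioi (0:ℝ)) :=
  (auxIntOn_cexp_Ioi (by rw [aux_re_minus]; linarith)).congr_fun
    (fun t ht => (strip_eqOn_Ioi z t ht).symm) measurableSet_Ioi

lemma strip_integrable {z : ℂ} (h1 : -1 < z.im) (h2 : z.im < 1) :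
    Integrable (fun t : ℝ => Complex.exp (I * z * t) * (Real.exp (-|t|) : ℂ)) := by
  rw [← integrableOn_univ, ← Iic_union_Ioi (a := (0:ℝ)), integrableOn_union]
  exact ⟨strip_intOn_Iic h2, strip_intOn_Ioi h1⟩

lemma strip_integral {z : ℂ} (h1 : -1 < z.im) (h2 : z.im < 1) :
    ∫ t : ℝ, Complex.exp (I * z * t) * (Real.exp (-|t|) : ℂ) = 2 / (1 + z ^ 2) := by
  have hp : (I * z + 1) ≠ 0 := aux_ne_of_re (by rw [aux_re_plus]; intro h; linarith)
  have hm : (I * z - 1) ≠ 0 := aux_ne_of_re (by rw [aux_re_minus]; intro h; linarith)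
  have hq : (1 + z ^ 2) ≠ 0 := by
    rw [← aux_factor z]
    exact mul_ne_zero hp (neg_ne_zero.mpr hm)
  rw [← intervalIntegral.integral_Iic_add_Ioi (strip_intOn_Iic h2) (strip_intOn_Ioi h1),
    setIntegral_congr_fun measurableSet_Iic (strip_eqOn_Iic z),
    setIntegral_congr_fun measurableSet_Ioi (strip_eqOn_Ioi z),
    auxInt_cexp_Iic (by rw [aux_re_plus]; linarith),
    auxInt_cexp_Ioi (by rw [aux_re_minus]; linarith)]
  field_simp
  linear_combination (-2*z^2) * Complex.I_sq

lemma upper_eqOn (z : ℂ) : ∀ t ∈ Ioi (0:ℝ),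
    Complex.exp (I * z * t) * ((Real.exp t - Real.exp (-t) : ℝ) : ℂ)
      = Complex.exp ((I * z + 1) * t) - Complex.exp ((I * z - 1) * t) := by
  intro t _
  rw [Complex.ofReal_sub, Complex.ofReal_exp, Complex.ofReal_exp, mul_sub,
    ← Complex.exp_add, ← Complex.exp_add]
  congr 2 <;> push_cast <;> ring

lemma upper_intOn {z : ℂ} (h : 1 < z.im) :
    IntegrableOn (fun t : ℝ => Complex.exp (I * z * t) * ((Real.exp t - Real.exp (-t) : ℝ) : ℂ))
      (Ioi (0:ℝ)) :=
  MeasureTheory.IntegrableOn.congr_fun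
    ((auxIntOn_cexp_Ioi (by rw [aux_re_plus]; linarith)).sub
      (auxIntOn_cexp_Ioi (by rw [aux_re_minus]; linarith)))
    (fun t ht => (upper_eqOn z t ht).symm) measurableSet_Ioi

lemma upper_integral {z : ℂ} (h : 1 < z.im) :
    ∫ t : ℝ in Ioi (0:ℝ), Complex.exp (I * z * t) * ((Real.exp t - Real.exp (-t) : ℝ) : ℂ)
      = -2 / (1 + z ^ 2) := by
  have hp : (I * z + 1) ≠ 0 := aux_ne_of_re (by rw [aux_re_plus]; intro h'; linarith)
  have hm : (I * z - 1) ≠ 0 := aux_ne_of_re (by rw [aux_re_minus]; intro h'; linarith)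
  have hq : (1 + z ^ 2) ≠ 0 := by
    rw [← aux_factor z]; exact mul_ne_zero hp (neg_ne_zero.mpr hm)
  rw [setIntegral_congr_fun measurableSet_Ioi (upper_eqOn z),
    integral_sub (auxIntOn_cexp_Ioi (by rw [aux_re_plus]; linarith))
      (auxIntOn_cexp_Ioi (by rw [aux_re_minus]; linarith)),
    auxInt_cexp_Ioi (by rw [aux_re_plus]; linarith),
    auxInt_cexp_Ioi (by rw [aux_re_minus]; linarith)]
  field_simp
  ring_nf
  linear_combination (2*z^2) * Complex.I_sq

lemma key_posdef (μ : Measure ℝ) (w : ℝ → ℝ) (hw : ∀ᵐ t ∂μ, 0 ≤ w t)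
    (n : ℕ) (z : Fin n → ℂ) (ξ : Fin n → ℂ)
    (hInt : ∀ k l : Fin n, Integrable
      (fun t : ℝ => Complex.exp (I * (z k - (starRingEnd ℂ) (z l)) * t) * (w t : ℂ)) μ) :
    0 ≤ ∑ k, ∑ l, (∫ t : ℝ, Complex.exp (I * (z k - (starRingEnd ℂ) (z l)) * t) * (w t : ℂ) ∂μ)
        * ξ k * (starRingEnd ℂ) (ξ l) := by
  classical
  set a : Fin n → ℝ → ℂ := fun k t => ξ k * Complex.exp (I * z k * t) with ha
  have hconj : ∀ (l : Fin n) (t : ℝ), (starRingEnd ℂ) (a l t)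
      = (starRingEnd ℂ) (ξ l) * Complex.exp (-(I * (starRingEnd ℂ) (z l) * t)) := by
    intro l t
    rw [ha]
    simp only [map_mul, ← Complex.exp_conj, Complex.conj_I, Complex.conj_ofReal]
    ring_nf
  have hsplit : ∀ (k l : Fin n) (t : ℝ),
      (ξ k * (starRingEnd ℂ) (ξ l)) *
        (Complex.exp (I * (z k - (starRingEnd ℂ) (z l)) * t) * (w t : ℂ))
      = a k t * (starRingEnd ℂ) (a l t) * (w t : ℂ) := by
    intro k l t
    rw [hconj, ha]
    rw [show I * (z k - (starRingEnd ℂ) (z l)) * (t:ℂ)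
        = I * z k * t + -(I * (starRingEnd ℂ) (z l) * t) by ring, Complex.exp_add]
    ring
  have hInt' : ∀ k l : Fin n, Integrable (fun t : ℝ => (ξ k * (starRingEnd ℂ) (ξ l)) *
      (Complex.exp (I * (z k - (starRingEnd ℂ) (z l)) * t) * (w t : ℂ))) μ :=
    fun k l => (hInt k l).const_mul _
  have h1 : ∑ k, ∑ l, (∫ t : ℝ, Complex.exp (I * (z k - (starRingEnd ℂ) (z l)) * t) * (w t : ℂ) ∂μ)
        * ξ k * (starRingEnd ℂ) (ξ l)
      = ∫ t : ℝ, ∑ k, ∑ l, (ξ k * (starRingEnd ℂ) (ξ l)) *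
          (Complex.exp (I * (z k - (starRingEnd ℂ) (z l)) * t) * (w t : ℂ)) ∂μ := by
    rw [integral_finset_sum _ (fun k _ => integrable_finset_sum _ fun l _ => hInt' k l)]
    refine Finset.sum_congr rfl fun k _ => ?_
    rw [integral_finset_sum _ (fun l _ => hInt' k l)]
    refine Finset.sum_congr rfl fun l _ => ?_
    rw [integral_const_mul]
    ring
  have h2 : ∀ t : ℝ, ∑ k, ∑ l, (ξ k * (starRingEnd ℂ) (ξ l)) *
          (Complex.exp (I * (z k - (starRingEnd ℂ) (z l)) * t) * (w t : ℂ))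
      = ((Complex.normSq (∑ k, a k t) * w t : ℝ) : ℂ) := by
    intro t
    simp_rw [hsplit]
    have hs : ∑ k, ∑ l, a k t * (starRingEnd ℂ) (a l t) * (w t : ℂ)
        = (∑ k, a k t) * (starRingEnd ℂ) (∑ l, a l t) * (w t : ℂ) := by
      rw [map_sum, Finset.sum_mul_sum, Finset.sum_mul]
      exact Finset.sum_congr rfl fun k _ => by rw [Finset.sum_mul]
    rw [hs, Complex.mul_conj, ← Complex.ofReal_mul]
  rw [h1]
  simp_rw [h2]
  have h3 : ∫ (t : ℝ), ((Complex.normSq (∑ k, a k t) * w t : ℝ) : ℂ) ∂μ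
      = ((∫ t : ℝ, Complex.normSq (∑ k, a k t) * w t ∂μ : ℝ) : ℂ) := integral_ofReal (𝕜 := ℂ)
  rw [h3]
  exact Complex.zero_le_real.mpr (integral_nonneg_of_ae
    (hw.mono fun t ht => mul_nonneg (Complex.normSq_nonneg _) ht))

lemma ereal_neg_one_lt {x : ℝ} (h : (-1 : EReal) < (x : EReal)) : -1 < x := by
  have h' : ((-1:ℝ) : EReal) < (x : EReal) := by rwa [show ((-1:ℝ):EReal) = (-1:EReal) by rw [EReal.coe_neg, EReal.coe_one]]
  exact_mod_cast h'

lemma ereal_lt_neg_one {x : ℝ} (h : (x : EReal) < (-1 : EReal)) : x < -1 := by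
  have h' : (x : EReal) < ((-1:ℝ) : EReal) := by rwa [show ((-1:ℝ):EReal) = (-1:EReal) by rw [EReal.coe_neg, EReal.coe_one]]
  exact_mod_cast h'

lemma ereal_one_lt_coe {x : ℝ} (h : (1 : EReal) < (x : EReal)) : 1 < x := by
  have h' : ((1:ℝ) : EReal) < (x : EReal) := by rwa [show ((1:ℝ):EReal) = (1:EReal) by rw [EReal.coe_one]]
  exact_mod_cast h'

lemma half_mul_nonneg {B : ℂ} (hB : 0 ≤ B) : 0 ≤ (1/2 : ℂ) * B := by
  have h2 : (1/2 : ℂ) = ((1/2 : ℝ) : ℂ) := by norm_num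
  exact mul_nonneg (h2 ▸ Complex.zero_le_real.mpr (by norm_num)) hB

lemma sub_im_conj (z w : ℂ) : (z - (starRingEnd ℂ) w).im = z.im + w.im := by
  simp [Complex.sub_im]

lemma posdef_strip : IsPosDefOnC (fun z => 1 / (1 + z ^ 2)) (HStrip (-1) 1) := by
  intro n z hz ξ
  have hb : ∀ k l, -1 < (z k - (starRingEnd ℂ) (z l)).im ∧ (z k - (starRingEnd ℂ) (z l)).im < 1 := by
    intro k l
    have h := hz k l
    simp only [HStrip, mem_setOf_eq] at h
    exact ⟨ereal_neg_one_lt h.1, by exact_mod_cast h.2⟩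
  have hsum : ∑ k, ∑ l, (fun z => 1 / (1 + z ^ 2)) (z k - (starRingEnd ℂ) (z l)) * ξ k
        * (starRingEnd ℂ) (ξ l)
      = (1/2 : ℂ) * ∑ k, ∑ l, (∫ t : ℝ, Complex.exp (I * (z k - (starRingEnd ℂ) (z l)) * t)
          * ((Real.exp (-|t|) : ℝ) : ℂ)) * ξ k * (starRingEnd ℂ) (ξ l) := by
    rw [Finset.mul_sum]
    refine Finset.sum_congr rfl fun k _ => ?_
    rw [Finset.mul_sum]
    refine Finset.sum_congr rfl fun l _ => ?_
    simp only []
    rw [strip_integral (hb k l).1 (hb k l).2]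
    ring
  rw [hsum]
  exact half_mul_nonneg (key_posdef volume _ (ae_of_all _ fun t => (Real.exp_pos _).le) n z ξ
    (fun k l => strip_integrable (hb k l).1 (hb k l).2))

lemma posdef_upper : IsPosDefOnC (fun z => -(1 / (1 + z ^ 2))) (HStrip 1 ⊤) := by
  intro n z hz ξ
  have hb : ∀ k l, 1 < (z k - (starRingEnd ℂ) (z l)).im := by
    intro k l
    have h := hz k l
    simp only [HStrip, mem_setOf_eq] at h
    exact ereal_one_lt_coe h.1
  have hsum : ∑ k, ∑ l, (fun z => -(1 / (1 + z ^ 2))) (z k - (starRingEnd ℂ) (z l)) * ξ k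
        * (starRingEnd ℂ) (ξ l)
      = (1/2 : ℂ) * ∑ k, ∑ l, (∫ t : ℝ in Ioi (0:ℝ),
          Complex.exp (I * (z k - (starRingEnd ℂ) (z l)) * t)
          * ((Real.exp t - Real.exp (-t) : ℝ) : ℂ)) * ξ k * (starRingEnd ℂ) (ξ l) := by
    rw [Finset.mul_sum]
    refine Finset.sum_congr rfl fun k _ => ?_
    rw [Finset.mul_sum]
    refine Finset.sum_congr rfl fun l _ => ?_
    simp only []
    rw [upper_integral (hb k l)]
    ring
  rw [hsum]
  refine half_mul_nonneg (key_posdef (volume.restrict (Ioi (0:ℝ))) _ ?_ n z ξ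
    (fun k l => upper_intOn (hb k l)))
  rw [ae_restrict_iff' measurableSet_Ioi]
  refine ae_of_all _ fun t ht => ?_
  have : -t ≤ t := by have := le_of_lt (mem_Ioi.mp ht); linarith
  exact sub_nonneg.mpr (Real.exp_le_exp.mpr this)

lemma posdef_lower : IsPosDefOnC (fun z => -(1 / (1 + z ^ 2))) (HStrip ⊥ (-1)) := by
  intro n z hz ξ
  set w : Fin n → ℂ := fun k => -(z k) with hwdef
  have hw : ∀ k l, w k - (starRingEnd ℂ) (w l) ∈ HStrip 1 ⊤ := by
    intro k l
    have h := hz k l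
    simp only [HStrip, mem_setOf_eq] at h ⊢
    have him : (z k - (starRingEnd ℂ) (z l)).im < -1 := ereal_lt_neg_one h.2
    constructor
    · have : (w k - (starRingEnd ℂ) (w l)).im = -((z k - (starRingEnd ℂ) (z l)).im) := by
        simp [hwdef]; ring
      rw [this]
      exact_mod_cast (by linarith : (1:ℝ) < -((z k - (starRingEnd ℂ) (z l)).im))
    · exact EReal.coe_lt_top _
  have := posdef_upper n w hw ξ
  have hEq : ∀ k l, w k - (starRingEnd ℂ) (w l) = -(z k - (starRingEnd ℂ) (z l)) := by
    intro k l
    simp [hwdef]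
    ring
  refine le_of_le_of_eq this (Finset.sum_congr rfl fun k _ => Finset.sum_congr rfl fun l _ => ?_)
  simp only []
  rw [hEq k l, neg_sq]


/-- `f(z) = 1/(1+z²)` is the Fourier–Laplace transform of `½ e^{-|t|} dt` on the strip
`S_{-1,1}`, positive definite there, and negative definite on the complementary half-planes. -/
theorem stmt12 :
    (∀ z ∈ HStrip (-1) 1,
      1 / (1 + z ^ 2) =
        (1 / 2 : ℂ) * ∫ t : ℝ, Complex.exp (I * z * t) * (Real.exp (-|t|) : ℂ)) ∧
    IsPosDefOnC (fun z => 1 / (1 + z ^ 2)) (HStrip (-1) 1) ∧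
    IsPosDefOnC (fun z => -(1 / (1 + z ^ 2))) (HStrip 1 ⊤) ∧
    IsPosDefOnC (fun z => -(1 / (1 + z ^ 2))) (HStrip ⊥ (-1)) := by
  refine ⟨?_, posdef_strip, posdef_upper, posdef_lower⟩
  intro z hz
  simp only [HStrip, mem_setOf_eq] at hz
  rw [strip_integral (ereal_neg_one_lt hz.1) (by exact_mod_cast hz.2)]
  ring
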